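/- Let G be a vertex-weighted undirected graph having a tree decomposition of width k ≥ 2 and elongation s ≥ 2, and let t ≥ 2 be an integer. Set a = k+1 and g = ((k+1)·(a^{(s+1)t-2}(a+1) - 2))/(a-1). Then G has a (t,g)-trimming: a set U of vertices of weight at most W/t (W the total weight of G) such that every simple path in G with more than g edges contains a vertex of U. -/

import Mathlib

open scoped Classical

/-- A tree decomposition of a graph `G`. -/
structure TreeDecomp (V : Type) (G : SimpleGraph V) where
  X : Type
  T : SimpleGraph X
  tree : T.IsTree
  B : X → Finset V
  cover : ∀ v : V, ∃ x : X, v ∈ B x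
  edges : ∀ u v : V, G.Adj u v → ∃ x : X, u ∈ B x ∧ v ∈ B x
  subtree : ∀ (v : V) (x y z : X) (p : T.Walk x z), p.IsPath → y ∈ p.support →
    v ∈ B x → v ∈ B z → v ∈ B y

/-- A `(t,g)`-trimming of a vertex-weighted graph. -/
def IsTrimming {V : Type} [Fintype V] (G : SimpleGraph V) (w : V → ℝ)
    (t g : ℝ) (U : Finset V) : Prop :=
  (∑ v ∈ U, w v) ≤ (∑ v, w v) / t ∧
    ∀ (u v : V) (p : G.Walk u v), p.IsPath → (p.length : ℝ) > g →
      ∃ x ∈ p.support, x ∈ U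


namespace TrimProof
open SimpleGraph

variable {X : Type} {T : SimpleGraph X}

noncomputable def pathTo (hT : T.IsTree) (root x : X) : T.Walk root x :=
  (hT.existsUnique_path root x).choose

lemma pathTo_isPath (hT : T.IsTree) (root x : X) : (pathTo hT root x).IsPath :=
  (hT.existsUnique_path root x).choose_spec.1

lemma path_eq_pathTo (hT : T.IsTree) {root x : X} (p : T.Walk root x) (hp : p.IsPath) :
    p = pathTo hT root x :=
  (hT.existsUnique_path root x).choose_spec.2 p hp

lemma path_length_eq_dist (hT : T.IsTree) {u v : X} (p : T.Walk u v) (hp : p.IsPath) :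
    p.length = T.dist u v := by
  obtain ⟨q, hq, hql⟩ := hT.isConnected.exists_path_of_dist u v
  rw [(hT.existsUnique_path u v).unique hp hq, hql]

lemma dist_add_of_mem_support (hT : T.IsTree) {u v x : X} (p : T.Walk u v) (hp : p.IsPath)
    (hx : x ∈ p.support) : T.dist u x + T.dist x v = T.dist u v := by
  have h1 := path_length_eq_dist hT _ (hp.takeUntil hx)
  have h2 := path_length_eq_dist hT _ (hp.dropUntil hx)
  have h3 := path_length_eq_dist hT p hp
  have h4 := congrArg Walk.length (p.take_spec hx)
  rw [Walk.length_append] at h4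
  omega

/-- `x` is an ancestor of `z` (relative to `root`). -/
def Anc (hT : T.IsTree) (root x z : X) : Prop := x ∈ (pathTo hT root z).support

lemma anc_self (hT : T.IsTree) (root x : X) : Anc hT root x x :=
  Walk.end_mem_support _

lemma anc_root_mem (hT : T.IsTree) (root z : X) : Anc hT root root z :=
  Walk.start_mem_support _

lemma anc_dist_add (hT : T.IsTree) {root x z : X} (h : Anc hT root x z) :
    T.dist root x + T.dist x z = T.dist root z :=
  dist_add_of_mem_support hT _ (pathTo_isPath hT root z) h

lemma anc_depth_le (hT : T.IsTree) {root x z : X} (h : Anc hT root x z) :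
    T.dist root x ≤ T.dist root z := by
  have := anc_dist_add hT h; omega

lemma anc_eq_of_depth_le (hT : T.IsTree) {root x z : X} (h : Anc hT root x z)
    (h2 : T.dist root z ≤ T.dist root x) : z = x := by
  have h3 := anc_dist_add hT h
  have h4 : T.dist x z = 0 := by omega
  have := hT.isConnected x z
  rw [SimpleGraph.dist_eq_zero_iff_eq_or_not_reachable] at h4
  rcases h4 with h4 | h4
  · exact h4.symm
  · exact absurd (hT.isConnected x z) h4

lemma takeUntil_pathTo (hT : T.IsTree) {root x z : X} (h : Anc hT root x z) :
    (pathTo hT root z).takeUntil x h = pathTo hT root x :=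
  path_eq_pathTo hT _ ((pathTo_isPath hT root z).takeUntil h)

lemma anc_trans (hT : T.IsTree) {root x y z : X} (h1 : Anc hT root x y) (h2 : Anc hT root y z) :
    Anc hT root x z := by
  have : x ∈ ((pathTo hT root z).takeUntil y h2).support := by
    rw [takeUntil_pathTo hT h2]; exact h1
  exact (pathTo hT root z).support_takeUntil_subset h2 this

lemma adj_dist_le (hT : T.IsTree) {root u y : X} (h : T.Adj u y) :
    T.dist root y ≤ T.dist root u + 1 := by
  have h1 := hT.isConnected.dist_triangle (u := root) (v := u) (w := y)
  have h2 : T.dist u y ≤ 1 := by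
    have := SimpleGraph.dist_le (Walk.cons h Walk.nil)
    simpa using this
  omega

lemma anc_adj (hT : T.IsTree) {root x z y : X} (h : Anc hT root x z) (hadj : T.Adj z y)
    (hd : T.dist root x ≤ T.dist root y) : Anc hT root x y := by
  by_cases hy : y ∈ (pathTo hT root z).support
  · by_cases hxy : x ∈ ((pathTo hT root z).takeUntil y hy).support
    · rw [takeUntil_pathTo hT hy] at hxy; exact hxy
    · have hxd : x ∈ ((pathTo hT root z).dropUntil y hy).support := by
        have hsp := (pathTo hT root z).take_spec hy
        have hmem : x ∈ (pathTo hT root z).support := h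
        rw [← hsp, Walk.mem_support_append_iff] at hmem
        tauto
      have h1 := anc_dist_add hT (x := y) (z := z) hy
      have h2 := dist_add_of_mem_support hT _ ((pathTo_isPath hT root z).dropUntil hy) hxd
      have h3 := anc_dist_add hT h
      have h4 : T.dist y x = 0 := by omega
      have h5 : y = x := by
        rw [SimpleGraph.dist_eq_zero_iff_eq_or_not_reachable] at h4
        rcases h4 with h4 | h4
        · exact h4
        · exact absurd (hT.isConnected y x) h4
      rw [← h5]; exact anc_self hT root y
  · have hq : ((pathTo hT root z).concat hadj).IsPath := by
      rw [← Walk.isPath_reverse_iff, Walk.reverse_concat]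
      apply Walk.IsPath.cons
      · rw [Walk.isPath_reverse_iff]; exact pathTo_isPath hT root z
      · rw [Walk.support_reverse, List.mem_reverse]; exact hy
    have heq := path_eq_pathTo hT _ hq
    show x ∈ (pathTo hT root y).support
    rw [← heq, Walk.support_concat]
    exact List.mem_append_left _ h

lemma walk_anc (hT : T.IsTree) {root x u z : X} (q : T.Walk u z) (h : Anc hT root x u)
    (hall : ∀ n ∈ q.support, T.dist root x ≤ T.dist root n) : Anc hT root x z := by
  induction q with
  | nil => exact h
  | @cons a b c hadj q ih =>
    exact ih (anc_adj hT h hadj (hall b (by simp))) (fun n hn => hall n (by simp [hn]))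

lemma walk_ivt (hT : T.IsTree) {root : X} {tgt : ℕ} :
    ∀ {u v : X} (q : T.Walk u v), T.dist root u ≤ tgt → tgt ≤ T.dist root v →
      ∃ n ∈ q.support, T.dist root n = tgt := by
  intro u v q
  induction q with
  | nil => intro h1 h2; exact ⟨_, Walk.start_mem_support _, by omega⟩
  | @cons a b c' hadj q ih =>
    intro h1 h2
    by_cases hc : T.dist root a = tgt
    · exact ⟨a, by simp, hc⟩
    · have hb : T.dist root b ≤ tgt := by
        have := adj_dist_le hT (root := root) hadj; omega
      obtain ⟨n, hn, hnc⟩ := ih hb h2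
      exact ⟨n, by simp [hn], hnc⟩

lemma anc_strict (hT : T.IsTree) {root x z : X} (h : Anc hT root x z) (hne : z ≠ x) :
    T.dist root x < T.dist root z := by
  rcases lt_or_ge (T.dist root x) (T.dist root z) with h' | h'
  · exact h'
  · exact absurd (anc_eq_of_depth_le hT h h') hne

lemma mem_dropUntil_of_anc (hT : T.IsTree) {root xs x' z : X} (h1 : Anc hT root xs x')
    (h2 : Anc hT root x' z) (hne : x' ≠ xs) :
    x' ∈ ((pathTo hT root z).dropUntil xs (anc_trans hT h1 h2)).support := by
  have h3 : Anc hT root xs z := anc_trans hT h1 h2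
  by_contra hcon
  have hx : x' ∈ ((pathTo hT root z).takeUntil xs h3).support := by
    have hsp := (pathTo hT root z).take_spec h3
    have hmem : x' ∈ (pathTo hT root z).support := h2
    rw [← hsp, Walk.mem_support_append_iff] at hmem
    tauto
  rw [takeUntil_pathTo hT h3] at hx
  exact hne (anc_eq_of_depth_le hT h1 (anc_depth_le hT hx))


section Decomp
variable {V : Type} {G : SimpleGraph V}

lemma walk_in_S (D : TreeDecomp V G) (v : V) {x z : D.X} (hx : v ∈ D.B x) (hz : v ∈ D.B z) :
    ∃ q : D.T.Walk x z, ∀ y ∈ q.support, v ∈ D.B y := by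
  obtain ⟨q0⟩ := D.tree.isConnected x z
  exact ⟨q0.bypass, fun y hy => D.subtree v x y z q0.bypass q0.bypass_isPath hy hx hz⟩

/-- The region of tree nodes touched by a list of vertices. -/
def Reg (D : TreeDecomp V G) (L : List V) : Set D.X := {x | ∃ v ∈ L, v ∈ D.B x}

lemma Reg_mono (D : TreeDecomp V G) {L L' : List V} (h : ∀ v ∈ L, v ∈ L') :
    Reg D L ⊆ Reg D L' := by
  rintro x ⟨v, hv, hvb⟩; exact ⟨v, h v hv, hvb⟩

lemma head_conn (D : TreeDecomp V G) :
    ∀ (L : List V) (v : V), (v :: L).Chain' G.Adj → ∀ {x y : D.X}, v ∈ D.B x →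
      y ∈ Reg D (v :: L) → ∃ q : D.T.Walk x y, ∀ n ∈ q.support, n ∈ Reg D (v :: L) := by
  intro L
  induction L with
  | nil =>
    intro v _ x y hx hy
    obtain ⟨u, hu, hub⟩ := hy
    simp only [List.mem_singleton] at hu
    subst hu
    obtain ⟨q, hq⟩ := walk_in_S D u hx hub
    exact ⟨q, fun n hn => ⟨u, by simp, hq n hn⟩⟩
  | cons u L'' ih =>
    intro v hchain x y hx hy
    obtain ⟨ww, hw, hwb⟩ := hy
    rcases List.mem_cons.1 hw with hw1 | hw2
    · subst hw1
      obtain ⟨q, hq⟩ := walk_in_S D ww hx hwb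
      exact ⟨q, fun n hn => ⟨ww, by simp, hq n hn⟩⟩
    · have hadj : G.Adj v u := List.isChain_cons_cons.1 hchain |>.1
      obtain ⟨zb, hvzb, huzb⟩ := D.edges v u hadj
      obtain ⟨q1, hq1⟩ := walk_in_S D v hx hvzb
      have hy' : y ∈ Reg D (u :: L'') := ⟨ww, hw2, hwb⟩
      obtain ⟨q2, hq2⟩ := ih u (List.isChain_cons_cons.1 hchain |>.2) huzb hy'
      refine ⟨q1.append q2, fun n hn => ?_⟩
      rcases (SimpleGraph.Walk.mem_support_append_iff _ _).1 hn with h | h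
      · exact ⟨v, by simp, hq1 n h⟩
      · exact Reg_mono D (fun a ha => List.mem_cons_of_mem _ ha) (hq2 n h)

lemma region_conn (D : TreeDecomp V G) (L : List V) (hc : L.Chain' G.Adj) {x y : D.X}
    (hx : x ∈ Reg D L) (hy : y ∈ Reg D L) :
    ∃ q : D.T.Walk x y, ∀ n ∈ q.support, n ∈ Reg D L := by
  cases L with
  | nil => obtain ⟨v, hv, _⟩ := hx; simp at hv
  | cons v L' =>
    obtain ⟨z0, hz0⟩ := D.cover v
    obtain ⟨q1, hq1⟩ := head_conn D L' v hc hz0 hx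
    obtain ⟨q2, hq2⟩ := head_conn D L' v hc hz0 hy
    refine ⟨q1.reverse.append q2, fun n hn => ?_⟩
    rcases (SimpleGraph.Walk.mem_support_append_iff _ _).1 hn with h | h
    · rw [SimpleGraph.Walk.support_reverse, List.mem_reverse] at h; exact hq1 n h
    · exact hq2 n h

end Decomp

/-- The path-length bounding function. -/
def Nf (a : ℕ) : ℕ → ℕ → ℕ
  | 0, f => a - f
  | j+1, f => (a - f) + (2 - f) * Nf a j 1 + (a - 1) * Nf a j 2

lemma Nf_zero (a f : ℕ) : Nf a 0 f = a - f := rfl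
lemma Nf_succ (a j f : ℕ) : Nf a (j+1) f = (a - f) + (2 - f) * Nf a j 1 + (a - 1) * Nf a j 2 := rfl

lemma Nf_21 (a : ℕ) : ∀ j, Nf a j 2 ≤ Nf a j 1 := by
  intro j; cases j with
  | zero => simp [Nf_zero]; omega
  | succ j => simp only [Nf_succ]; omega

lemma Nf_02 (a : ℕ) (ha : 2 ≤ a) : ∀ j, Nf a j 0 + Nf a j 2 = 2 * Nf a j 1 := by
  intro j; cases j with
  | zero => simp [Nf_zero]; omega
  | succ j => simp only [Nf_succ]; omega

lemma Nf_le_two (a j f : ℕ) (ha : 2 ≤ a) (hf : f ≤ 2) :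
    Nf a j f ≤ Nf a j 2 + (2 - f) * (Nf a j 1 - Nf a j 2) := by
  have h1 := Nf_21 a j
  have h2 := Nf_02 a ha j
  interval_cases f <;> omega

lemma Nf2_real {a : ℕ} (ha : 3 ≤ a) : ∀ j, ((Nf a j 2 : ℕ) : ℝ) = ((a : ℝ) - 1)^(j+1) - 1 := by
  intro j
  induction j with
  | zero =>
    have : ((a - 2 : ℕ) : ℝ) = (a : ℝ) - 2 := by
      have : 2 ≤ a := by omega
      push_cast [this]; ring
    simp [Nf_zero, this]; ring
  | succ j ih =>
    have h2 : ((a - 2 : ℕ) : ℝ) = (a : ℝ) - 2 := by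
      have : 2 ≤ a := by omega
      push_cast [this]; ring
    have h1 : ((a - 1 : ℕ) : ℝ) = (a : ℝ) - 1 := by
      have : 1 ≤ a := by omega
      push_cast [this]; ring
    rw [Nf_succ]
    push_cast [h2, h1, ih]
    ring

lemma Nf1_real {a : ℕ} (ha : 3 ≤ a) : ∀ j,
    ((Nf a j 1 : ℕ) : ℝ) = (((a : ℝ) - 1)^(j+2) - ((a : ℝ) - 1)) / ((a : ℝ) - 2) := by
  intro j
  have hA : (3 : ℝ) ≤ (a : ℝ) := by exact_mod_cast ha
  have hne : (a : ℝ) - 2 ≠ 0 := by linarith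
  have h1 : ((a - 1 : ℕ) : ℝ) = (a : ℝ) - 1 := by
    have : 1 ≤ a := by omega
    push_cast [this]; ring
  induction j with
  | zero =>
    rw [Nf_zero, h1]
    field_simp
    ring
  | succ j ih =>
    rw [Nf_succ]
    push_cast [h1, Nf2_real ha j, ih]
    field_simp
    ring

lemma Nf_final {a : ℕ} (ha : 3 ≤ a) (j : ℕ) :
    ((Nf a (j+1) 0 : ℕ) : ℝ) ≤
      (a : ℝ) * (((a : ℝ))^(j+1) * ((a : ℝ) + 1) - 2) / ((a : ℝ) - 1) + 1 := by
  have hA : (3 : ℝ) ≤ (a : ℝ) := by exact_mod_cast ha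
  have hne2 : (a : ℝ) - 2 ≠ 0 := by linarith
  have hne1 : (a : ℝ) - 1 ≠ 0 := by linarith
  have h1 : ((a - 1 : ℕ) : ℝ) = (a : ℝ) - 1 := by
    have : 1 ≤ a := by omega
    push_cast [this]; ring
  have hRP : ((a : ℝ) - 1)^(j+1) ≤ ((a : ℝ))^(j+1) :=
    pow_le_pow_left₀ (by linarith) (by linarith) _
  have hR1 : (1 : ℝ) ≤ ((a : ℝ) - 1)^(j+1) := one_le_pow₀ (by linarith)
  rw [Nf_succ]
  simp only [Nat.sub_zero]
  push_cast [h1]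
  rw [Nf1_real ha j, Nf2_real ha j]
  have hkey : ((a : ℝ) * (((a : ℝ))^(j+1) * ((a : ℝ) + 1) - 2) / ((a : ℝ) - 1) + 1)
      - ((a : ℝ) + 2 * ((((a : ℝ) - 1) ^ (j + 2) - ((a : ℝ) - 1)) / ((a : ℝ) - 2))
        + ((a : ℝ) - 1) * (((a : ℝ) - 1) ^ (j + 1) - 1))
      = (((a : ℝ) - 2) * ((a : ℝ) * ((a : ℝ) + 1)) * (((a : ℝ))^(j+1) - ((a : ℝ) - 1)^(j+1))
          + (a : ℝ) * ((a : ℝ) - 3) * ((a : ℝ) - 1)^(j+1) + 2) / ((( a : ℝ) - 1) * ((a : ℝ) - 2)) := by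
    rw [pow_succ ((a : ℝ) - 1) (j+1)]
    field_simp
    ring
  have hnum : (0 : ℝ) ≤ ((a : ℝ) - 2) * ((a : ℝ) * ((a : ℝ) + 1)) * (((a : ℝ))^(j+1) - ((a : ℝ) - 1)^(j+1))
      + (a : ℝ) * ((a : ℝ) - 3) * ((a : ℝ) - 1)^(j+1) + 2 := by
    have t1 : (0 : ℝ) ≤ ((a : ℝ) - 2) * ((a : ℝ) * ((a : ℝ) + 1)) * (((a : ℝ))^(j+1) - ((a : ℝ) - 1)^(j+1)) := by
      apply mul_nonneg (mul_nonneg (by linarith) (by nlinarith)) (by linarith)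
    have t2 : (0 : ℝ) ≤ (a : ℝ) * ((a : ℝ) - 3) * ((a : ℝ) - 1)^(j+1) := by
      apply mul_nonneg (mul_nonneg (by linarith) (by linarith)) (by linarith)
    linarith
  have hden : (0 : ℝ) < (((a : ℝ)) - 1) * (((a : ℝ)) - 2) := by nlinarith
  have hfrac := div_nonneg hnum (le_of_lt hden)
  rw [← hkey] at hfrac
  linarith

section Rec
variable {V : Type} {G : SimpleGraph V}

lemma pair_adj_of_chain' {α : Type*} {R : α → α → Prop} {l : List α} (h : l.Chain' R) {x y : α}
    (s t2 : List α) (heq : l = s ++ x :: y :: t2) : R x y := by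
  subst heq
  have h2 := h.infix (l₁ := [x, y]) ⟨s, t2, by simp⟩
  exact List.isChain_pair.1 h2

lemma exists_min_reg (D : TreeDecomp V G) (root : D.X) {L : List V} (hne : L ≠ []) :
    ∃ xs ∈ Reg D L, ∀ y ∈ Reg D L, D.T.dist root xs ≤ D.T.dist root y := by
  obtain ⟨v0, hv0⟩ : ∃ v0, v0 ∈ L := by
    cases L with
    | nil => simp at hne
    | cons a l => exact ⟨a, by simp⟩
  obtain ⟨x0, hx0⟩ := D.cover v0
  have hex : ∃ n, ∃ x, x ∈ Reg D L ∧ D.T.dist root x = n := ⟨_, x0, ⟨v0, hv0, hx0⟩, rfl⟩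
  obtain ⟨x, hx, hxd⟩ := Nat.find_spec hex
  exact ⟨x, hx, fun y hy => by rw [hxd]; exact Nat.find_min' hex ⟨y, hy, rfl⟩⟩

lemma reg_anc_min (D : TreeDecomp V G) (root : D.X) {L : List V} (hchain : L.Chain' G.Adj)
    {xs : D.X} (hxs : xs ∈ Reg D L)
    (hmin : ∀ y ∈ Reg D L, D.T.dist root xs ≤ D.T.dist root y) :
    ∀ z ∈ Reg D L, Anc D.tree root xs z := by
  intro z hz
  obtain ⟨q, hq⟩ := region_conn D L hchain hxs hz
  exact walk_anc D.tree q (anc_self _ _ _) fun n hn => hmin n (hq n hn)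

lemma flank_core (D : TreeDecomp V G) (root : D.X) {xs x' z : D.X} {o : V}
    (ho_xs : o ∈ D.B xs) (ho_z : o ∈ D.B z)
    (h1 : Anc D.tree root xs x') (h2 : Anc D.tree root x' z) (hne : x' ≠ xs) : o ∈ D.B x' := by
  have h3 : Anc D.tree root xs z := anc_trans D.tree h1 h2
  have hmem := mem_dropUntil_of_anc D.tree h1 h2 hne
  exact D.subtree o xs x' z ((pathTo D.tree root z).dropUntil xs h3)
    ((pathTo_isPath D.tree root z).dropUntil h3) hmem ho_xs ho_z

lemma flank_helper (D : TreeDecomp V G) (root : D.X) {xs : D.X} {P0 : List V}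
    (hchain : P0.Chain' G.Adj)
    (hanc : ∀ u ∈ P0, ∀ x : D.X, u ∈ D.B x → Anc D.tree root xs x)
    (hnotS : ∀ u ∈ P0, u ∉ D.B xs)
    {o q : V} (ho : o ∈ D.B xs) (hq : q ∈ P0) (hoq : G.Adj o q)
    {x' : D.X} (hx' : x' ∈ Reg D P0)
    (hmin : ∀ y ∈ Reg D P0, D.T.dist root x' ≤ D.T.dist root y) :
    o ∈ D.B x' := by
  obtain ⟨z, hoz, hqz⟩ := D.edges o q hoq
  have hz : z ∈ Reg D P0 := ⟨q, hq, hqz⟩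
  obtain ⟨qw, hqw⟩ := region_conn D P0 hchain hx' hz
  have hanc2 : Anc D.tree root x' z := walk_anc D.tree qw (anc_self _ _ _)
    fun n hn => hmin n (hqw n hn)
  obtain ⟨u, hu, hub⟩ := hx'
  exact flank_core D root ho hoz (hanc u hu x' hub) hanc2
    (fun hcon => hnotS u hu (hcon ▸ hub))

lemma split_first_piece (p : V → Prop) :
    ∀ (M : List V) (hne : M ≠ []), ¬ p (M.head hne) →
    ∃ P0 rest, M = P0 ++ rest ∧ P0 ≠ [] ∧ (∀ u ∈ P0, ¬ p u) ∧
      (rest = [] ∨ ∃ u M3, rest = u :: M3 ∧ p u) := by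
  intro M
  induction M with
  | nil => intro hne; simp at hne
  | cons a M2 ih =>
    intro _ hpa
    simp only [List.head_cons] at hpa
    cases M2 with
    | nil => exact ⟨[a], [], by simp, by simp, by simpa using hpa, Or.inl rfl⟩
    | cons b M3 =>
      by_cases hpb : p b
      · exact ⟨[a], b :: M3, by simp, by simp, by simpa using hpa, Or.inr ⟨b, M3, rfl, hpb⟩⟩
      · obtain ⟨P0, rest, heq, hPne, hall, hcase⟩ := ih (by simp) (by simpa using hpb)
        refine ⟨a :: P0, rest, by simp [heq], by simp, ?_, hcase⟩
        intro u hu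
        rcases List.mem_cons.1 hu with rfl | hu2
        · exact hpa
        · exact hall u hu2

lemma rec_main (D : TreeDecomp V G) (root : D.X) (a : ℕ) (ha : 3 ≤ a)
    (hwidth : ∀ x : D.X, (D.B x).card ≤ a) :
    ∀ (j : ℕ) (L : List V) (wl wr : Option V),
      (wl.toList ++ L ++ wr.toList).Chain' G.Adj →
      (wl.toList ++ L ++ wr.toList).Nodup →
      L ≠ [] →
      (∀ x ∈ Reg D L, ∀ y ∈ Reg D L, D.T.dist root y ≤ D.T.dist root x + j) →
      (∀ o ∈ wl.toList ++ wr.toList, ∀ x ∈ Reg D L,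
        (∀ y ∈ Reg D L, D.T.dist root x ≤ D.T.dist root y) → o ∈ D.B x) →
      L.length ≤ Nf a j (wl.toList.length + wr.toList.length) := by
  intro j
  induction j with
  | zero =>
    intro L wl wr hchain hnodup hne hspread hflank
    obtain ⟨xs, hxs, hmin⟩ := exists_min_reg D root hne
    have chainL : L.Chain' G.Adj := hchain.infix ⟨wl.toList, wr.toList, by simp⟩
    have hancall := reg_anc_min D root chainL hxs hmin
    have hregsub : ∀ z ∈ Reg D L, z = xs := by
      intro z hz
      exact anc_eq_of_depth_le D.tree (hancall z hz) (hspread xs hxs z hz)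
    have hLsub : ∀ v ∈ L, v ∈ D.B xs := by
      intro v hv
      obtain ⟨x, hx⟩ := D.cover v
      have hxr : x ∈ Reg D L := ⟨v, hv, hx⟩
      exact (hregsub x hxr) ▸ hx
    have hAllsub : ∀ v ∈ (wl.toList ++ L ++ wr.toList), v ∈ D.B xs := by
      intro v hv
      rcases List.mem_append.1 hv with hv1 | hv3
      · rcases List.mem_append.1 hv1 with hv1 | hv2
        · exact hflank v (List.mem_append_left _ hv1) xs hxs hmin
        · exact hLsub v hv2
      · exact hflank v (List.mem_append_right _ hv3) xs hxs hmin
    have hlen : (wl.toList ++ L ++ wr.toList).length ≤ a := by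
      have h1 : (wl.toList ++ L ++ wr.toList).toFinset ⊆ D.B xs := by
        intro v hv; exact hAllsub v (List.mem_toFinset.1 hv)
      calc (wl.toList ++ L ++ wr.toList).length
          = (wl.toList ++ L ++ wr.toList).toFinset.card := (List.toFinset_card_of_nodup hnodup).symm
        _ ≤ (D.B xs).card := Finset.card_le_card h1
        _ ≤ a := hwidth xs
    rw [Nf_zero]
    simp only [List.length_append] at hlen ⊢
    omega
  | succ j ihj =>
    intro L wl wr hchain hnodup hneL hspread hflank
    obtain ⟨xs, hxs, hmin⟩ := exists_min_reg D root hneL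
    have chainL : L.Chain' G.Adj := hchain.infix ⟨wl.toList, wr.toList, by simp⟩
    have hancall := reg_anc_min D root chainL hxs hmin
    have hwind : ∀ z ∈ Reg D L, D.T.dist root z ≤ D.T.dist root xs + (j+1) :=
      fun z hz => hspread xs hxs z hz
    have hflankxs : ∀ o ∈ wl.toList ++ wr.toList, o ∈ D.B xs :=
      fun o ho => hflank o ho xs hxs hmin
    have inner : ∀ (n : ℕ) (M : List V) (ol orr : Option V),
        (ol.toList ++ M ++ orr.toList).Chain' G.Adj →
        (ol.toList ++ M ++ orr.toList).Nodup →
        M.length ≤ n →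
        (∀ v ∈ M, ∀ x : D.X, v ∈ D.B x →
          Anc D.tree root xs x ∧ D.T.dist root x ≤ D.T.dist root xs + (j+1)) →
        (∀ o ∈ ol.toList, o ∈ D.B xs) → (∀ o ∈ orr.toList, o ∈ D.B xs) →
        M.length ≤ (M.filter (fun v => v ∈ D.B xs)).length
          + ((M.filter (fun v => v ∈ D.B xs)).length + 1) * Nf a j 2
          + (if ol.isSome then 0 else Nf a j 1 - Nf a j 2)
          + (if orr.isSome then 0 else Nf a j 1 - Nf a j 2) := by
      intro n
      induction n with
      | zero =>
        intro M ol orr _ _ hlen _ _ _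
        have hM : M = [] := List.length_eq_zero_iff.1 (Nat.le_zero.1 hlen)
        subst hM; simp
      | succ n ihn =>
        intro M ol orr hchainM hnodupM hlenM hsubM holB horB
        cases M with
        | nil => simp
        | cons v M' =>
          by_cases hv : v ∈ D.B xs
          · -- head removed; recurse on M' with left flank (some v)
            have hsuffix : ((some v : Option V).toList ++ M' ++ orr.toList) <:+
                (ol.toList ++ (v :: M') ++ orr.toList) := ⟨ol.toList, by simp⟩
            have hres := ihn M' (some v) orr (hchainM.suffix hsuffix)
              (hnodupM.sublist hsuffix.sublist) (by simpa using Nat.le_of_succ_le_succ hlenM)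
              (fun u hu x hx => hsubM u (List.mem_cons_of_mem _ hu) x hx)
              (by intro o ho; simp only [Option.toList_some, List.mem_singleton] at ho
                  exact ho ▸ hv)
              horB
            have hfilter : ((v :: M').filter (fun u => u ∈ D.B xs)).length
                = (M'.filter (fun u => u ∈ D.B xs)).length + 1 := by
              simp [List.filter_cons, hv]
            simp only [List.length_cons, hfilter]
            rw [Nat.succ_mul]
            simp only [Option.isSome_some, if_true] at hres
            have h21 := Nf_21 a j
            rcases ol with _ | ww <;> rcases orr with _ | ww' <;>
              simp only [Option.isSome_some, Option.isSome_none, Bool.false_eq_true,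
                if_true, if_false] at hres ⊢ <;>
              omega
          · -- head starts a piece
            obtain ⟨P0, rest, heqM, hneP0, hallP0, hcase⟩ :=
              split_first_piece (fun u => u ∈ D.B xs) (v :: M') (by simp) (by simpa using hv)
            have hP0subM : ∀ u ∈ P0, u ∈ v :: M' := by
              intro u hu; rw [heqM]; exact List.mem_append_left _ hu
            have hchainP0 : P0.Chain' G.Adj := by
              apply hchainM.infix
              exact ⟨ol.toList, rest ++ orr.toList, by rw [heqM]; simp⟩
            have hancP0 : ∀ u ∈ P0, ∀ x : D.X, u ∈ D.B x → Anc D.tree root xs x :=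
              fun u hu x hx => (hsubM u (hP0subM u hu) x hx).1
            have hspreadP0 : ∀ x ∈ Reg D P0, ∀ y ∈ Reg D P0,
                D.T.dist root y ≤ D.T.dist root x + j := by
              rintro x ⟨u, hu, hub⟩ y ⟨u', hu', hub'⟩
              have hx1 := (hsubM u (hP0subM u hu) x hub).1
              have hxne : x ≠ xs := fun hcon => hallP0 u hu (hcon ▸ hub)
              have hstrict := anc_strict D.tree hx1 hxne
              have hy2 := (hsubM u' (hP0subM u' hu') y hub').2
              omega
            have hflankP0 : ∀ (o : V), o ∈ D.B xs → (∃ q ∈ P0, G.Adj o q) →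
                ∀ x' ∈ Reg D P0, (∀ y ∈ Reg D P0, D.T.dist root x' ≤ D.T.dist root y) →
                  o ∈ D.B x' := by
              rintro o hoB ⟨q, hq, hoq⟩ x' hx' hmin'
              exact flank_helper D root hchainP0 hancP0 hallP0 hoB hq hoq hx' hmin'
            obtain ⟨ph, pt, rfl⟩ : ∃ ph pt, P0 = ph :: pt := by
              cases P0 with
              | nil => exact absurd rfl hneP0
              | cons ph pt => exact ⟨ph, pt, rfl⟩
            have holadj : ∀ ww, ol = some ww → G.Adj ww ph := by
              intro ww hol
              apply pair_adj_of_chain' hchainM [] (pt ++ rest ++ orr.toList)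
              rw [hol, heqM]; simp
            have hlast : (ph :: pt) = (ph :: pt).dropLast
                ++ [(ph :: pt).getLast (by simp)] :=
              (List.dropLast_append_getLast (by simp)).symm
            rcases hcase with hrest | ⟨u, M3, hrestu, huB⟩
            · -- single piece: M = P0
              subst hrest
              simp only [List.append_nil] at heqM
              have hres := ihj (ph :: pt) ol orr (by rw [← heqM]; exact hchainM)
                (by rw [← heqM]; exact hnodupM) (by simp) hspreadP0 ?_
              · have hfilter0 : ((v :: M').filter (fun u => u ∈ D.B xs)).length = 0 := by
                  rw [heqM, List.filter_eq_nil_iff.2 (by intro u hu; simpa using hallP0 u hu)]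
                  rfl
                have hlen0 : (v :: M').length = (ph :: pt).length := by rw [heqM]
                rw [hlen0, hfilter0]
                have h21 := Nf_21 a j
                have h02 := Nf_02 a (by omega) j
                rcases ol with _ | ww <;> rcases orr with _ | ww' <;>
                  simp only [Option.toList_some, Option.toList_none, List.length_cons,
                    List.length_nil, Option.isSome_some, Option.isSome_none, Bool.false_eq_true,
                    if_true, if_false, Nat.zero_add, Nat.add_zero, Nat.reduceAdd] at hres ⊢ <;>
                  omega
              · intro o ho x' hx' hmin'
                apply hflankP0 o ?_ ?_ x' hx' hmin'
                · rcases List.mem_append.1 ho with h1 | h2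
                  · exact holB o h1
                  · exact horB o h2
                · rcases List.mem_append.1 ho with h1 | h2
                  · obtain ⟨ww, rfl⟩ : ∃ ww, ol = some ww := by
                      cases ol with
                      | none => simp at h1
                      | some ww => exact ⟨ww, rfl⟩
                    simp only [Option.toList_some, List.mem_singleton] at h1
                    subst h1
                    exact ⟨ph, by simp, holadj o rfl⟩
                  · obtain ⟨ww', rfl⟩ : ∃ ww', orr = some ww' := by
                      cases orr with
                      | none => simp at h2
                      | some ww' => exact ⟨ww', rfl⟩
                    simp only [Option.toList_some, List.mem_singleton] at h2
                    subst h2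
                    refine ⟨(ph :: pt).getLast (by simp), List.getLast_mem _, ?_⟩
                    have hadj := pair_adj_of_chain' hchainM
                      (x := (ph :: pt).getLast (by simp)) (y := o)
                      (ol.toList ++ (ph :: pt).dropLast) []
                      (by rw [heqM]
                          conv_lhs => rw [hlast]
                          simp)
                    exact hadj.symm
            · -- piece followed by removed vertex u and tail M3
              subst hrestu
              have hprefP0u : (ol.toList ++ (ph :: pt) ++ [u]) <+:
                  (ol.toList ++ (v :: M') ++ orr.toList) :=
                ⟨M3 ++ orr.toList, by rw [heqM]; simp⟩
              have hresP0 := ihj (ph :: pt) ol (some u) (hchainM.prefix hprefP0u)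
                (hnodupM.sublist hprefP0u.sublist) (by simp) hspreadP0 ?_
              swap
              · intro o ho x' hx' hmin'
                apply hflankP0 o ?_ ?_ x' hx' hmin'
                · rcases List.mem_append.1 ho with h1 | h2
                  · exact holB o h1
                  · simp only [Option.toList_some, List.mem_singleton] at h2
                    exact h2 ▸ huB
                · rcases List.mem_append.1 ho with h1 | h2
                  · obtain ⟨ww, rfl⟩ : ∃ ww, ol = some ww := by
                      cases ol with
                      | none => simp at h1
                      | some ww => exact ⟨ww, rfl⟩
                    simp only [Option.toList_some, List.mem_singleton] at h1
                    subst h1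
                    exact ⟨ph, by simp, holadj o rfl⟩
                  · simp only [Option.toList_some, List.mem_singleton] at h2
                    subst h2
                    refine ⟨(ph :: pt).getLast (by simp), List.getLast_mem _, ?_⟩
                    have hadj := pair_adj_of_chain' hchainM
                      (x := (ph :: pt).getLast (by simp)) (y := o)
                      (ol.toList ++ (ph :: pt).dropLast) (M3 ++ orr.toList)
                      (by rw [heqM]
                          conv_lhs => rw [hlast]
                          simp)
                    exact hadj.symm
              have hsuffixM3 : ((some u : Option V).toList ++ M3 ++ orr.toList) <:+
                  (ol.toList ++ (v :: M') ++ orr.toList) :=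
                ⟨ol.toList ++ (ph :: pt), by rw [heqM]; simp⟩
              have hlenM3 : M3.length ≤ n := by
                have hle : (v :: M').length = (ph :: pt).length + 1 + M3.length := by
                  rw [heqM]; simp [List.length_append]; omega
                simp only [List.length_cons] at hle hlenM
                omega
              have hresM3 := ihn M3 (some u) orr (hchainM.suffix hsuffixM3)
                (hnodupM.sublist hsuffixM3.sublist) hlenM3
                (fun u' hu' x hx => hsubM u' (by
                  rw [heqM]; exact List.mem_append_right _ (List.mem_cons_of_mem _ hu')) x hx)
                (by intro o ho; simp only [Option.toList_some, List.mem_singleton] at ho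
                    exact ho ▸ huB)
                horB
              have hfilterM : ((v :: M').filter (fun q => q ∈ D.B xs)).length
                  = (M3.filter (fun q => q ∈ D.B xs)).length + 1 := by
                rw [heqM, List.filter_append,
                  List.filter_eq_nil_iff.2 (by intro q hq; simpa using hallP0 q hq),
                  List.filter_cons]
                simp [huB]
              have hlenMeq : (v :: M').length = (ph :: pt).length + 1 + M3.length := by
                rw [heqM]; simp [List.length_append]; omega
              have h21 := Nf_21 a j
              have h02 := Nf_02 a (by omega) j
              simp only [Option.isSome_some, if_true] at hresM3
              rw [hlenMeq, hfilterM, Nat.succ_mul]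
              rcases ol with _ | ww <;>
                simp only [Option.toList_some, Option.toList_none, List.length_cons,
                  List.length_nil, Option.isSome_some, Option.isSome_none, Bool.false_eq_true,
                  if_true, if_false, Nat.zero_add, Nat.add_zero, Nat.reduceAdd] at hresP0 ⊢ <;>
                omega
    have hinner := inner L.length L wl wr hchain hnodup le_rfl
      (fun v hv x hx => ⟨hancall x ⟨v, hv, hx⟩, hwind x ⟨v, hv, hx⟩⟩)
      (fun o ho => hflankxs o (List.mem_append_left _ ho))
      (fun o ho => hflankxs o (List.mem_append_right _ ho))
    have hcard : (L.filter (fun v => v ∈ D.B xs)).length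
        + (wl.toList.length + wr.toList.length) ≤ a := by
      have hsubl : List.Sublist (wl.toList ++ L.filter (fun v => v ∈ D.B xs) ++ wr.toList)
          (wl.toList ++ L ++ wr.toList) :=
        List.Sublist.append
          (List.Sublist.append (List.Sublist.refl _) List.filter_sublist)
          (List.Sublist.refl _)
      have hnd := hnodup.sublist hsubl
      have hmem : ∀ v ∈ (wl.toList ++ L.filter (fun v => v ∈ D.B xs) ++ wr.toList),
          v ∈ D.B xs := by
        intro v hv
        rcases List.mem_append.1 hv with hv1 | hv3
        · rcases List.mem_append.1 hv1 with hv1 | hv2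
          · exact hflankxs v (List.mem_append_left _ hv1)
          · exact by simpa using (List.mem_filter.1 hv2).2
        · exact hflankxs v (List.mem_append_right _ hv3)
      have h1 : (wl.toList ++ L.filter (fun v => v ∈ D.B xs) ++ wr.toList).toFinset ⊆ D.B xs :=
        fun v hv => hmem v (List.mem_toFinset.1 hv)
      calc (L.filter (fun v => v ∈ D.B xs)).length + (wl.toList.length + wr.toList.length)
          = (wl.toList ++ L.filter (fun v => v ∈ D.B xs) ++ wr.toList).length := by
            simp only [List.length_append]; omega
        _ = (wl.toList ++ L.filter (fun v => v ∈ D.B xs) ++ wr.toList).toFinset.card :=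
            (List.toFinset_card_of_nodup hnd).symm
        _ ≤ (D.B xs).card := Finset.card_le_card h1
        _ ≤ a := hwidth xs
    rw [Nf_succ]
    have h21 := Nf_21 a j
    have h02 := Nf_02 a (by omega) j
    rcases wl with _ | ww <;> rcases wr with _ | ww' <;>
      [skip; skip; skip; skip] <;>
      simp only [Option.toList_some, Option.toList_none, List.length_cons, List.length_nil,
        Option.isSome_some, Option.isSome_none, Bool.false_eq_true, if_true, if_false,
        Nat.zero_add, Nat.add_zero, Nat.reduceAdd] at hinner hcard ⊢
    · -- wl = none, wr = none : f = 0
      have hmul : ((L.filter (fun v => v ∈ D.B xs)).length + 1) * Nf a j 2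
          ≤ ((a - 1) + 2) * Nf a j 2 :=
        Nat.mul_le_mul_right _ (by omega)
      rw [Nat.add_mul (a-1) 2] at hmul
      omega
    · -- wl = none, wr = some : f = 1
      have hmul : ((L.filter (fun v => v ∈ D.B xs)).length + 1) * Nf a j 2
          ≤ ((a - 1) + 1) * Nf a j 2 :=
        Nat.mul_le_mul_right _ (by omega)
      rw [Nat.add_mul (a-1) 1] at hmul
      omega
    · -- wl = some, wr = none : f = 1
      have hmul : ((L.filter (fun v => v ∈ D.B xs)).length + 1) * Nf a j 2
          ≤ ((a - 1) + 1) * Nf a j 2 :=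
        Nat.mul_le_mul_right _ (by omega)
      rw [Nat.add_mul (a-1) 1] at hmul
      omega
    · -- wl = some, wr = some : f = 2
      have hmul : ((L.filter (fun v => v ∈ D.B xs)).length + 1) * Nf a j 2
          ≤ (a - 1) * Nf a j 2 :=
        Nat.mul_le_mul_right _ (by omega)
      omega

end Rec

section Main
variable {V : Type} {G : SimpleGraph V}

lemma exists_congr_in_window (q r d : ℕ) (hr : r < q) :
    ∃ c, d ≤ c ∧ c ≤ d + (q - 1) ∧ c % q = r := by
  have hq : 0 < q := by omega
  have hd := Nat.div_add_mod d q
  have hm : d % q < q := Nat.mod_lt _ hq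
  by_cases hc : d % q ≤ r
  · refine ⟨q * (d / q) + r, by omega, by omega, ?_⟩
    rw [Nat.mul_add_mod]
    exact Nat.mod_eq_of_lt hr
  · have hms : q * (d / q + 1) = q * (d / q) + q := Nat.mul_succ q _
    refine ⟨q * (d / q + 1) + r, by omega, by omega, ?_⟩
    rw [Nat.mul_add_mod]
    exact Nat.mod_eq_of_lt hr

lemma trim_mod_gap {s t i i' dx dx' : ℕ} (hit : i < t) (hit' : i' < t) (hne : i ≠ i')
    (h1 : dx % ((s+1)*t) = i*(s+1)) (h2 : dx' % ((s+1)*t) = i'*(s+1))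
    (h3 : dx ≤ dx' + s) (h4 : dx' ≤ dx + s) : False := by
  have hd := Nat.div_add_mod dx ((s+1)*t)
  have hd' := Nat.div_add_mod dx' ((s+1)*t)
  rw [h1] at hd
  rw [h2] at hd'
  have hb : (i+1)*(s+1) ≤ t*(s+1) := Nat.mul_le_mul_right _ (by omega)
  have hb' : (i'+1)*(s+1) ≤ t*(s+1) := Nat.mul_le_mul_right _ (by omega)
  have hbe : (i+1)*(s+1) = i*(s+1) + 1*(s+1) := Nat.add_mul i 1 (s+1)
  have hbe' : (i'+1)*(s+1) = i'*(s+1) + 1*(s+1) := Nat.add_mul i' 1 (s+1)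
  have hqc : (s+1)*t = t*(s+1) := Nat.mul_comm _ _
  rcases Nat.lt_trichotomy (dx / ((s+1)*t)) (dx' / ((s+1)*t)) with hlt | heq | hgt
  · have hmm : (s+1)*t * (dx / ((s+1)*t) + 1) ≤ (s+1)*t * (dx' / ((s+1)*t)) :=
      Nat.mul_le_mul le_rfl (by omega)
    have hms : (s+1)*t * (dx / ((s+1)*t) + 1) = (s+1)*t * (dx / ((s+1)*t)) + (s+1)*t :=
      Nat.mul_succ _ _
    omega
  · rw [heq] at hd
    rcases Nat.lt_or_ge i i' with hii | hii
    · have := Nat.mul_le_mul_right (s+1) (show i+1 ≤ i' by omega)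
      have hexp : (i'*(s+1)) = (i'*(s+1)) := rfl
      omega
    · have hii2 : i' < i := by omega
      have := Nat.mul_le_mul_right (s+1) (show i'+1 ≤ i by omega)
      omega
  · have hmm : (s+1)*t * (dx' / ((s+1)*t) + 1) ≤ (s+1)*t * (dx / ((s+1)*t)) :=
      Nat.mul_le_mul le_rfl (by omega)
    have hms : (s+1)*t * (dx' / ((s+1)*t) + 1) = (s+1)*t * (dx' / ((s+1)*t)) + (s+1)*t :=
      Nat.mul_succ _ _
    omega

end Main

end TrimProof

open TrimProof in
/-- If a vertex-weighted graph has a tree decomposition of width at most `k ≥ 2` and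
elongation at most `s ≥ 2`, and `t ≥ 2`, then with `a = k+1` it has a
`(t, (k+1)(a^{(s+1)t-2}(a+1) - 2)/(a-1))`-trimming. -/
theorem trimming_of_bounded_elongation_treewidth {V : Type} [Fintype V]
    (G : SimpleGraph V) (w : V → ℝ) (hw : ∀ v, 0 ≤ w v)
    (k s t : ℕ) (hk : 2 ≤ k) (hs : 2 ≤ s) (ht : 2 ≤ t)
    (D : TreeDecomp V G)
    (hwidth : ∀ x : D.X, (D.B x).card ≤ k + 1)
    (helong : ∀ x y : D.X, ((D.B x) ∩ (D.B y)).Nonempty → D.T.dist x y ≤ s) :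
    ∃ U : Finset V,
      IsTrimming G w t
        (((k : ℝ) + 1) *
            (((k : ℝ) + 1) ^ ((s + 1) * t - 2) * (((k : ℝ) + 1) + 1) - 2) /
          (((k : ℝ) + 1) - 1)) U := by
  classical
  obtain ⟨root⟩ : Nonempty D.X := D.tree.isConnected.nonempty
  set q : ℕ := (s + 1) * t with hqdef
  have hq6 : 6 ≤ q := by
    calc 6 = 3 * 2 := rfl
    _ ≤ (s+1) * t := Nat.mul_le_mul (by omega) ht
  set U : ℕ → Finset V := fun i =>
    Finset.univ.filter (fun v => ∃ x : D.X, v ∈ D.B x ∧ D.T.dist root x % q = i * (s+1)) with hUdef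
  -- pairwise disjointness of the classes
  have hdisj : (↑(Finset.range t) : Set ℕ).PairwiseDisjoint U := by
    intro i hi i' hi' hne
    simp only [Finset.coe_range, Set.mem_Iio] at hi hi'
    refine Finset.disjoint_left.2 ?_
    intro v hv hv'
    rw [hUdef, Finset.mem_filter] at hv hv'
    obtain ⟨-, x, hx, hxm⟩ := hv
    obtain ⟨-, x', hx', hxm'⟩ := hv'
    have hdd : D.T.dist x x' ≤ s := helong x x' ⟨v, Finset.mem_inter.2 ⟨hx, hx'⟩⟩
    have htr1 : D.T.dist root x ≤ D.T.dist root x' + s := by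
      have := D.tree.isConnected.dist_triangle (u := root) (v := x') (w := x)
      have hc : D.T.dist x' x = D.T.dist x x' := SimpleGraph.dist_comm
      omega
    have htr2 : D.T.dist root x' ≤ D.T.dist root x + s := by
      have := D.tree.isConnected.dist_triangle (u := root) (v := x) (w := x')
      omega
    exact trim_mod_gap hi hi' hne hxm hxm' htr1 htr2
  -- total weight bound and choice of a light class
  have hsum : ∑ i ∈ Finset.range t, ∑ v ∈ U i, w v ≤ ∑ v, w v := by
    rw [← Finset.sum_biUnion hdisj]
    exact Finset.sum_le_sum_of_subset_of_nonneg (Finset.subset_univ _) (fun v _ _ => hw v)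
  have hex : ∃ i ∈ Finset.range t, (∑ v ∈ U i, w v) ≤ (∑ v, w v) / t := by
    by_contra hcon
    push_neg at hcon
    have hlt := Finset.sum_lt_sum_of_nonempty (Finset.nonempty_range_iff.2 (by omega)) hcon
    rw [Finset.sum_const, Finset.card_range, nsmul_eq_mul] at hlt
    have ht0 : (t : ℝ) ≠ 0 := Nat.cast_ne_zero.2 (by omega)
    have heq : (t : ℝ) * ((∑ v, w v) / t) = ∑ v, w v := by field_simp
    rw [heq] at hlt
    linarith
  obtain ⟨i₀, hi₀t, hi₀w⟩ := hex
  rw [Finset.mem_range] at hi₀t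
  refine ⟨U i₀, hi₀w, ?_⟩
  -- the hitting property
  intro u v p hp hgt
  by_contra hno
  push_neg at hno
  set L : List V := p.support with hLdef
  have hchainL : L.Chain' G.Adj := p.isChain_adj_support
  have hnodupL : L.Nodup := hp.support_nodup
  have hneL : L ≠ [] := p.support_ne_nil
  have havoid : ∀ v' ∈ L, ∀ x : D.X, v' ∈ D.B x → D.T.dist root x % q ≠ i₀ * (s+1) := by
    intro v' hv' x hx hmod
    have : v' ∈ U i₀ := by
      rw [hUdef, Finset.mem_filter]
      exact ⟨Finset.mem_univ _, x, hx, hmod⟩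
    exact hno v' hv' this
  have hrq : i₀ * (s+1) < q := by
    rw [hqdef]
    calc i₀ * (s+1) < t * (s+1) := Nat.mul_lt_mul_of_lt_of_le hi₀t le_rfl (by omega)
    _ = (s+1) * t := Nat.mul_comm _ _
  -- spread bound for the region of the path
  obtain ⟨xs, hxs, hmin⟩ := exists_min_reg D root hneL
  have hclaim : ∀ y ∈ Reg D L, D.T.dist root y ≤ D.T.dist root xs + (q - 2) := by
    intro y hy
    by_contra hc
    push_neg at hc
    obtain ⟨c, hc1, hc2, hc3⟩ := exists_congr_in_window q (i₀ * (s+1)) (D.T.dist root xs) hrq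
    obtain ⟨qw, hqw⟩ := region_conn D L hchainL hxs hy
    obtain ⟨n, hn, hnc⟩ := walk_ivt D.tree qw hc1 (by omega)
    obtain ⟨v', hv', hv'b⟩ := hqw n hn
    exact havoid v' hv' n hv'b (by rw [hnc]; exact hc3)
  have hspread : ∀ x ∈ Reg D L, ∀ y ∈ Reg D L,
      D.T.dist root y ≤ D.T.dist root x + (q - 2) := by
    intro x hx y hy
    have h1 := hclaim y hy
    have h2 := hmin x hx
    omega
  -- apply the main recursion
  have hrec := rec_main D root (k+1) (by omega) hwidth (q - 2) L none none
    (by simpa using hchainL) (by simpa using hnodupL) hneL hspread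
    (by intro o ho; simp at ho)
  simp only [Option.toList_none, List.length_nil, Nat.add_zero] at hrec
  -- numeric conclusion
  have hq2 : q - 2 = (q - 3) + 1 := by omega
  have hNf := Nf_final (a := k+1) (by omega) (q - 3)
  rw [← hq2] at hNf
  have hlsupp : L.length = p.length + 1 := p.length_support
  have hcast : ((k+1 : ℕ) : ℝ) = (k : ℝ) + 1 := by push_cast; ring
  rw [hcast] at hNf
  have hexp : (s + 1) * t - 2 = q - 2 := by rw [hqdef]
  rw [hexp] at hgt
  have hchain2 : (p.length : ℝ) + 1 ≤ ((Nf (k+1) (q-2) 0 : ℕ) : ℝ) := by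
    have : (p.length + 1 : ℕ) ≤ Nf (k+1) (q-2) 0 := by omega
    exact_mod_cast this
  linarith
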